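/- The function λ ↦ sin²(λπ/2)/(λ²·cos(λπ)) defined for 0 < |λ| < 1/2 tends to π²/4 as λ → 0, and is increasing in |λ| (hence ≥ π²/4 on its domain), diverging to ∞ as |λ| → 1/2. -/

import Mathlib

open Real Filter
open Topology

/-- The asymptotic variance factor of the fractional moment estimator. -/
noncomputable def varFactor (l : ℝ) : ℝ :=
  Real.sin (l * π / 2) ^ 2 / (l ^ 2 * Real.cos (l * π))

/-! Auxiliary material. -/

/-- Key trigonometric inequality. -/
lemma vf_key {t : ℝ} (ht : 0 < t) (ht' : t ≤ π / 4) :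
    Real.sin t - t * Real.cos t < 2 * Real.sin t ^ 3 := by
  set ψ : ℝ → ℝ := fun x => 2 * Real.sin x ^ 3 - Real.sin x + x * Real.cos x with hψ
  have hd : ∀ x : ℝ,
      HasDerivAt ψ (Real.sin x * (6 * Real.sin x * Real.cos x - x)) x := by
    intro x
    have h1 : HasDerivAt (fun y : ℝ => 2 * Real.sin y ^ 3)
        (2 * (3 * Real.sin x ^ 2 * Real.cos x)) x := by
      exact ((Real.hasDerivAt_sin x).pow 3).const_mul 2
    have h2 : HasDerivAt (fun y : ℝ => y * Real.cos y)
        (1 * Real.cos x + x * (-Real.sin x)) x :=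
      (hasDerivAt_id x).mul (Real.hasDerivAt_cos x)
    have := (h1.sub (Real.hasDerivAt_sin x)).add h2
    exact this.congr_deriv (by ring)
  have hmono : StrictMonoOn ψ (Set.Icc 0 (π / 4)) := by
    apply strictMonoOn_of_deriv_pos (convex_Icc _ _)
    · exact ((continuous_const.mul (continuous_sin.pow 3)).sub continuous_sin).add
        (continuous_id.mul continuous_cos) |>.continuousOn
    · intro x hx
      rw [interior_Icc] at hx
      rw [(hd x).deriv]
      have hx0 : 0 < x := hx.1
      have hx1 : x < π / 4 := hx.2
      have hπ : 0 < π := Real.pi_pos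
      have hsin : 0 < Real.sin x := Real.sin_pos_of_pos_of_lt_pi hx0 (by nlinarith)
      have hsin2 : 2 / π * (2 * x) ≤ Real.sin (2 * x) :=
        Real.mul_le_sin (by linarith) (by linarith)
      have h2x : Real.sin (2 * x) = 2 * Real.sin x * Real.cos x := Real.sin_two_mul x
      have hπ4 : π < 4 := by
        have := Real.pi_lt_d2; norm_num at this; linarith
      have : x < 6 * Real.sin x * Real.cos x := by
        have : 4 / π * x ≤ 2 * Real.sin x * Real.cos x := by
          rw [← h2x]; calc 4 / π * x = 2 / π * (2 * x) := by ring
            _ ≤ _ := hsin2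
        have h41 : 1 < 4 / π := (one_lt_div hπ).2 (by linarith)
        have h4 : x < 4 / π * x := by nlinarith
        nlinarith [Real.cos_pos_of_mem_Ioo
          (Set.mem_Ioo.2 ⟨by linarith, by linarith⟩ : x ∈ Set.Ioo (-(π/2)) (π/2)),
          Real.sin_pos_of_pos_of_lt_pi hx0 (by nlinarith)]
      exact mul_pos hsin (by linarith)
  have h0 : ψ 0 = 0 := by simp [hψ]
  have := hmono (Set.mem_Icc.2 ⟨le_refl 0, by positivity⟩)
    (Set.mem_Icc.2 ⟨ht.le, ht'⟩) ht
  rw [h0] at this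
  simp only [hψ] at this
  linarith

/-- The reparametrized reciprocal function. -/
noncomputable def vfPhi (t : ℝ) : ℝ := t ^ 2 / Real.sin t ^ 2 - 2 * t ^ 2

lemma vfPhi_hasDerivAt {x : ℝ} (hs : Real.sin x ≠ 0) :
    HasDerivAt vfPhi
      ((2 * x * Real.sin x ^ 2 - x ^ 2 * (2 * Real.sin x * Real.cos x)) /
        (Real.sin x ^ 2) ^ 2 - 4 * x) x := by
  have hu : HasDerivAt (fun y : ℝ => y ^ 2) (2 * x) x := by
    simpa using hasDerivAt_pow 2 x
  have hv : HasDerivAt (fun y : ℝ => Real.sin y ^ 2)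
      (2 * Real.sin x * Real.cos x) x := by
    have := (Real.hasDerivAt_sin x).pow 2
    exact this.congr_deriv (by ring)
  have hq := hu.div hv (by positivity)
  have hr : HasDerivAt (fun y : ℝ => 2 * y ^ 2) (4 * x) x := by
    have := hu.const_mul (2 : ℝ)
    exact this.congr_deriv (by ring)
  have := hq.sub hr
  exact this

lemma vfPhi_strictAnti : StrictAntiOn vfPhi (Set.Ioo 0 (π / 4)) := by
  apply strictAntiOn_of_deriv_neg (convex_Ioo _ _)
  · apply ContinuousOn.sub
    · apply ContinuousOn.div (continuous_pow 2).continuousOn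
        (continuous_sin.pow 2).continuousOn
      intro x hx
      have : 0 < Real.sin x :=
        Real.sin_pos_of_pos_of_lt_pi hx.1 (by nlinarith [Real.pi_pos, hx.2])
      exact pow_ne_zero 2 this.ne'
    · exact (continuous_const.mul (continuous_pow 2)).continuousOn
  · intro x hx
    rw [interior_Ioo] at hx
    obtain ⟨hx0, hx1⟩ := hx
    have hπ : 0 < π := Real.pi_pos
    have hsin : 0 < Real.sin x :=
      Real.sin_pos_of_pos_of_lt_pi hx0 (by nlinarith)
    rw [(vfPhi_hasDerivAt hsin.ne').deriv]
    have hkey := vf_key hx0 hx1.le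
    rw [sub_neg, div_lt_iff₀ (by positivity)]
    nlinarith [mul_pos hx0 hsin, mul_pos (mul_pos hx0 hsin) (pow_pos hsin 2)]

lemma vfPhi_pos {t : ℝ} (ht : 0 < t) (ht' : t < π / 4) : 0 < vfPhi t := by
  have hπ : 0 < π := Real.pi_pos
  have hsin : 0 < Real.sin t := Real.sin_pos_of_pos_of_lt_pi ht (by nlinarith)
  have hcos : 0 < Real.cos (2 * t) :=
    Real.cos_pos_of_mem_Ioo ⟨by linarith, by linarith⟩
  have h2 : Real.cos (2 * t) = 1 - 2 * Real.sin t ^ 2 := by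
    have h := Real.cos_two_mul t
    nlinarith [Real.sin_sq_add_cos_sq t]
  have h3 : vfPhi t = t ^ 2 * (1 - 2 * Real.sin t ^ 2) / Real.sin t ^ 2 := by
    unfold vfPhi
    field_simp
  rw [h3, ← h2]
  positivity

lemma vfPhi_le_one {t : ℝ} (ht : 0 < t) (ht' : t < π / 4) : vfPhi t ≤ 1 := by
  have hπ4 : π < 4 := by have := Real.pi_lt_d2; norm_num at this; linarith
  have ht1 : t < 1 := by nlinarith
  have hsin : t - t ^ 3 / 4 < Real.sin t := by have := Real.sin_gt_sub_cube ht; nlinarith [pow_pos ht 3]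
  have ht2 : t ^ 2 < 1 := by nlinarith
  have ht3 : t ^ 3 < t := by nlinarith [mul_pos ht (by linarith : (0:ℝ) < 1 - t ^ 2)]
  have ha : 0 < t - t ^ 3 / 4 := by nlinarith
  have hsin0 : 0 < Real.sin t := lt_trans ha hsin
  have h2 : (t - t ^ 3 / 4) ^ 2 < Real.sin t ^ 2 := by nlinarith
  unfold vfPhi
  rw [sub_le_iff_le_add, div_le_iff₀ (by positivity)]
  nlinarith [sq_nonneg t, sq_nonneg (t^2), mul_pos ht ht, h2, ht1]

lemma varFactor_eq {l : ℝ} (hl : 0 < l) (hl' : l < 1 / 2) :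
    varFactor l = (π ^ 2 / 4) / vfPhi (l * π / 2) := by
  have hπ : 0 < π := Real.pi_pos
  have ht : 0 < l * π / 2 := by positivity
  have ht' : l * π / 2 < π / 4 := by nlinarith
  have hsin : 0 < Real.sin (l * π / 2) :=
    Real.sin_pos_of_pos_of_lt_pi ht (by nlinarith)
  have hcos2 : Real.cos (l * π) = 1 - 2 * Real.sin (l * π / 2) ^ 2 := by
    have h := Real.cos_two_mul (l * π / 2)
    rw [show 2 * (l * π / 2) = l * π by ring] at h
    nlinarith [Real.sin_sq_add_cos_sq (l * π / 2)]
  have hphi : 0 < vfPhi (l * π / 2) := vfPhi_pos ht ht'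
  have hcos : 0 < 1 - 2 * Real.sin (l * π / 2) ^ 2 := by
    rw [← hcos2]
    exact Real.cos_pos_of_mem_Ioo ⟨by nlinarith, by nlinarith⟩
  rw [eq_div_iff hphi.ne']
  unfold varFactor vfPhi
  rw [hcos2]
  field_simp [hl.ne', hsin.ne', hcos.ne']
  ring

lemma varFactor_abs (l : ℝ) : varFactor l = varFactor |l| := by
  rcases abs_choice l with h | h
  · rw [h]
  · rw [h]
    unfold varFactor
    simp [neg_mul, neg_div, Real.sin_neg, Real.cos_neg]

theorem varFactor_properties :
    Tendsto varFactor (nhdsWithin 0 {0}ᶜ) (nhds (π ^ 2 / 4)) ∧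
    (∀ l₁ l₂ : ℝ, 0 < |l₁| → |l₁| < |l₂| → |l₂| < 1 / 2 →
      varFactor l₁ < varFactor l₂) ∧
    (∀ l : ℝ, 0 < |l| → |l| < 1 / 2 → π ^ 2 / 4 ≤ varFactor l) ∧
    Tendsto (fun l : ℝ => varFactor l) (nhdsWithin (1 / 2) (Set.Ioo 0 (1 / 2)))
      atTop := by
  have hπ : 0 < π := Real.pi_pos
  refine ⟨?_, ?_, ?_, ?_⟩
  · -- limit at 0
    have h1 : Tendsto (fun x : ℝ => Real.sin x / x) (𝓝[≠] 0) (𝓝 1) := by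
      have := hasDerivAt_iff_tendsto_slope.mp (Real.hasDerivAt_sin 0)
      rw [Real.cos_zero] at this
      refine this.congr fun x => ?_
      simp [slope_fun_def, div_eq_inv_mul]
    have h2 : Tendsto (fun l : ℝ => l * π / 2) (𝓝[≠] 0) (𝓝[≠] 0) := by
      rw [tendsto_nhdsWithin_iff]
      constructor
      · have : Continuous fun l : ℝ => l * π / 2 := by continuity
        simpa using (this.tendsto 0).mono_left nhdsWithin_le_nhds
      · filter_upwards [eventually_mem_nhdsWithin] with x hx
        simp only [Set.mem_compl_iff, Set.mem_singleton_iff] at *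
        intro h
        apply hx
        field_simp at h
        simpa [hπ.ne'] using h
    have h3 := h1.comp h2
    have h4 : Tendsto (fun l : ℝ => Real.cos (l * π)) (𝓝[≠] 0) (𝓝 1) := by
      have hc : Continuous fun l : ℝ => Real.cos (l * π) := by continuity
      have := (hc.tendsto 0).mono_left (nhdsWithin_le_nhds (s := {(0:ℝ)}ᶜ))
      simpa using this
    have h5 : Tendsto (fun l : ℝ =>
        (π / 2 * (Real.sin (l * π / 2) / (l * π / 2))) ^ 2 / Real.cos (l * π))
        (𝓝[≠] 0) (𝓝 ((π / 2 * 1) ^ 2 / 1)) :=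
      (((h3.const_mul (π / 2)).pow 2).div h4 one_ne_zero)
    have heq : (π / 2 * (1:ℝ)) ^ 2 / 1 = π ^ 2 / 4 := by ring
    rw [heq] at h5
    refine h5.congr' ?_
    filter_upwards [eventually_mem_nhdsWithin] with l hl
    simp only [Set.mem_compl_iff, Set.mem_singleton_iff] at hl
    have key : (π / 2 * (Real.sin (l * π / 2) / (l * π / 2))) ^ 2
        = Real.sin (l * π / 2) ^ 2 / l ^ 2 := by
      field_simp
    rw [key]
    unfold varFactor
    rw [div_div]
  · -- strict monotonicity in |l|
    intro l₁ l₂ h1 h2 h3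
    rw [varFactor_abs l₁, varFactor_abs l₂]
    set a := |l₁|; set b := |l₂|
    have ha : 0 < a := h1
    have hb : 0 < b := lt_trans h1 h2
    have hb' : b < 1 / 2 := h3
    have ha' : a < 1 / 2 := lt_trans h2 h3
    rw [varFactor_eq ha ha', varFactor_eq hb hb']
    have hta : a * π / 2 ∈ Set.Ioo 0 (π / 4) := ⟨by positivity, by nlinarith⟩
    have htb : b * π / 2 ∈ Set.Ioo 0 (π / 4) := ⟨by positivity, by nlinarith⟩
    have hanti := vfPhi_strictAnti hta htb (by nlinarith [h2])
    exact div_lt_div_of_pos_left (by positivity) (vfPhi_pos htb.1 htb.2) hanti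
  · -- lower bound
    intro l h1 h2
    rw [varFactor_abs l, varFactor_eq h1 h2]
    set a := |l|
    have hta : 0 < a * π / 2 := by positivity
    have hta' : a * π / 2 < π / 4 := by nlinarith [h2, h1]
    have hle := vfPhi_le_one hta hta'
    have hpos := vfPhi_pos hta hta'
    rw [le_div_iff₀ hpos]
    nlinarith
  · -- divergence at 1/2
    have hnum : Tendsto (fun l : ℝ => Real.sin (l * π / 2) ^ 2)
        (𝓝[Set.Ioo 0 (1/2)] (1/2)) (𝓝 (1/2)) := by
      have hc : Continuous fun l : ℝ => Real.sin (l * π / 2) ^ 2 := by continuity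
      have := (hc.tendsto (1/2)).mono_left
        (nhdsWithin_le_nhds (s := Set.Ioo (0:ℝ) (1/2)))
      have hval : Real.sin ((1:ℝ)/2 * π / 2) ^ 2 = 1/2 := by
        rw [show (1:ℝ)/2 * π / 2 = π / 4 by ring, Real.sin_pi_div_four]
        rw [div_pow, Real.sq_sqrt (by norm_num : (0:ℝ) ≤ 2)]
        norm_num
      rwa [hval] at this
    have hden : Tendsto (fun l : ℝ => l ^ 2 * Real.cos (l * π))
        (𝓝[Set.Ioo 0 (1/2)] (1/2)) (𝓝[>] 0) := by
      rw [tendsto_nhdsWithin_iff]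
      constructor
      · have hc : Continuous fun l : ℝ => l ^ 2 * Real.cos (l * π) := by continuity
        have := (hc.tendsto (1/2)).mono_left
          (nhdsWithin_le_nhds (s := Set.Ioo (0:ℝ) (1/2)))
        have hval : ((1:ℝ)/2) ^ 2 * Real.cos ((1:ℝ)/2 * π) = 0 := by
          rw [show (1:ℝ)/2 * π = π / 2 by ring, Real.cos_pi_div_two]
          ring
        rwa [hval] at this
      · filter_upwards [eventually_mem_nhdsWithin] with l hl
        obtain ⟨hl0, hl1⟩ := hl
        have hcos : 0 < Real.cos (l * π) :=
          Real.cos_pos_of_mem_Ioo ⟨by nlinarith, by nlinarith⟩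
        exact Set.mem_Ioi.2 (by positivity)
    have hinv := hden.inv_tendsto_nhdsGT_zero
    have := hnum.pos_mul_atTop (by norm_num) hinv
    refine this.congr fun l => ?_
    simp [varFactor, div_eq_mul_inv]
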